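/- Let n ≥ 2 and let p be a real number with −n ≤ p < ∞ and p ≠ 1. Suppose (K_i) is a sequence of convex bodies in ℝ^n converging in the Hausdorff distance to a convex body K_∞. For each i let x_i be the unique interior point of K_i satisfying ∫_{S^{n−1}} (h_{K_i}(u) − ⟨x_i,u⟩)^{p−1} u dσ(u) = 0, and let x_∞ be the corresponding point for K_∞. Then x_i → x_∞ as i → ∞. -/

import Mathlib

open MeasureTheory Metric Filter

noncomputable section

/-- The support function of a set `K ⊆ ℝⁿ`, as a function of `u`:
`h_K(u) = sup { ⟨y, u⟩ : y ∈ K }`. -/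
def suppFn {n : ℕ} (K : Set (EuclideanSpace ℝ (Fin n))) (u : EuclideanSpace ℝ (Fin n)) : ℝ :=
  sSup ((fun y => (inner ℝ y u : ℝ)) '' K)

/-- The spherical Lebesgue measure `σ` on the unit sphere `S^{n-1} ⊆ ℝⁿ`. -/
def sphMeasure (n : ℕ) : Measure (sphere (0 : EuclideanSpace ℝ (Fin n)) 1) :=
  (volume : Measure (EuclideanSpace ℝ (Fin n))).toSphere

variable {n : ℕ} {K L : Set (EuclideanSpace ℝ (Fin n))} {u v y z : EuclideanSpace ℝ (Fin n)}

lemma bddAbove_suppFn (hK : IsCompact K) (u : EuclideanSpace ℝ (Fin n)) :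
    BddAbove ((fun y => (inner ℝ y u : ℝ)) '' K) :=
  (hK.image (continuous_inner.comp (continuous_id.prodMk continuous_const) :
    Continuous fun y : EuclideanSpace ℝ (Fin n) => (inner ℝ y u : ℝ))).bddAbove

lemma inner_le_suppFn (hK : IsCompact K) (hy : y ∈ K) : (inner ℝ y u : ℝ) ≤ suppFn K u :=
  le_csSup (bddAbove_suppFn hK u) ⟨y, hy, rfl⟩

lemma suppFn_le (hne : K.Nonempty) (h : ∀ y ∈ K, (inner ℝ y u : ℝ) ≤ c) : suppFn K u ≤ c :=
  csSup_le (hne.image _) (by rintro _ ⟨y, hy, rfl⟩; exact h y hy)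

-- |h_K(u) - h_L(u)| ≤ hausdorffDist K L for unit u (one direction; other by symmetry)
lemma suppFn_le_of_hausdorff (hK : IsCompact K) (hL : IsCompact L) (hKne : K.Nonempty)
    (hLne : L.Nonempty) (hu : ‖u‖ = 1) :
    suppFn K u ≤ suppFn L u + hausdorffDist K L := by
  apply suppFn_le hKne
  intro y hy
  have hfin : EMetric.hausdorffEdist K L ≠ ⊤ :=
    hausdorffEdist_ne_top_of_nonempty_of_bounded hKne hLne hK.isBounded hL.isBounded
  obtain ⟨z, hz, hdz⟩ := hL.isClosed.exists_infDist_eq_dist hLne y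
  have h1 : dist y z ≤ hausdorffDist K L := by
    rw [← hdz]; exact infDist_le_hausdorffDist_of_mem hy hfin
  have h2 : (inner ℝ y u : ℝ) - (inner ℝ z u : ℝ) ≤ dist y z := by
    have : (inner ℝ y u : ℝ) - (inner ℝ z u : ℝ) = inner ℝ (y - z) u := (inner_sub_left _ _ _).symm
    rw [this]
    calc (inner ℝ (y - z) u : ℝ) ≤ ‖y - z‖ * ‖u‖ := real_inner_le_norm _ _
    _ = dist y z := by rw [hu, mul_one, dist_eq_norm]
  have h3 : (inner ℝ z u : ℝ) ≤ suppFn L u := inner_le_suppFn hL hz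
  linarith

-- Lipschitz in u
lemma suppFn_lip (hK : IsCompact K) (hKne : K.Nonempty) {R : ℝ}
    (hR : ∀ y ∈ K, ‖y‖ ≤ R) (u v : EuclideanSpace ℝ (Fin n)) :
    suppFn K u - suppFn K v ≤ R * ‖u - v‖ := by
  have : suppFn K u ≤ suppFn K v + R * ‖u - v‖ := by
    apply suppFn_le hKne
    intro y hy
    have h2 : (inner ℝ y u : ℝ) - (inner ℝ y v : ℝ) ≤ R * ‖u - v‖ := by
      have he : (inner ℝ y u : ℝ) - (inner ℝ y v : ℝ) = inner ℝ y (u - v) := (inner_sub_right _ _ _).symm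
      rw [he]
      calc (inner ℝ y (u - v) : ℝ) ≤ ‖y‖ * ‖u - v‖ := real_inner_le_norm _ _
      _ ≤ R * ‖u - v‖ := by
        apply mul_le_mul_of_nonneg_right (hR y hy) (norm_nonneg _)
    have h3 : (inner ℝ y v : ℝ) ≤ suppFn K v := inner_le_suppFn hK hy
    linarith
  linarith

lemma suppFn_continuous (hK : IsCompact K) (hKne : K.Nonempty) :
    Continuous (suppFn K) := by
  obtain ⟨R, hR⟩ := hK.isBounded.exists_norm_le
  apply LipschitzWith.continuous (K := Real.toNNReal R)
  apply LipschitzWith.of_dist_le_mul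
  intro u v
  rw [Real.dist_eq, abs_sub_le_iff]
  have hR0 : 0 ≤ R := le_trans (norm_nonneg _) (hR hKne.some hKne.some_mem)
  constructor
  · calc suppFn K u - suppFn K v ≤ R * ‖u - v‖ := suppFn_lip hK hKne hR u v
      _ = (Real.toNNReal R) * dist u v := by rw [dist_eq_norm, Real.coe_toNNReal R hR0]
  · calc suppFn K v - suppFn K u ≤ R * ‖v - u‖ := suppFn_lip hK hKne hR v u
      _ = (Real.toNNReal R) * dist u v := by rw [dist_eq_norm', Real.coe_toNNReal R hR0]

-- interior point gives positive gap
lemma suppFn_gap_pos (hK : IsCompact K) {ρ : ℝ} (hρ : 0 < ρ)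
    (hball : ball z ρ ⊆ K) (hu : ‖u‖ = 1) :
    (inner ℝ z u : ℝ) + ρ / 2 ≤ suppFn K u := by
  have hmem : z + (ρ / 2) • u ∈ K := by
    apply hball
    simp only [mem_ball, dist_eq_norm, add_sub_cancel_left, norm_smul]
    rw [hu, mul_one, Real.norm_eq_abs, abs_of_pos (by linarith)]
    linarith
  have := inner_le_suppFn (u := u) hK hmem
  rw [inner_add_left, real_inner_smul_left, real_inner_self_eq_norm_sq, hu] at this
  nlinarith

-- rpow Lipschitz bound on [A,B], 0 < A
lemma rpow_lip_bound {e A B : ℝ} (hA : 0 < A) {a b : ℝ} (ha : a ∈ Set.Icc A B)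
    (hb : b ∈ Set.Icc A B) :
    |a ^ e - b ^ e| ≤ (|e| * max (A ^ (e - 1)) (B ^ (e - 1))) * |a - b| := by
  set C := |e| * max (A ^ (e - 1)) (B ^ (e - 1)) with hC
  have key : ∀ t ∈ Set.Icc A B, HasDerivWithinAt (fun s : ℝ => s ^ e)
      (e * t ^ (e - 1)) (Set.Icc A B) t := by
    intro t ht
    exact (Real.hasDerivAt_rpow_const (Or.inl (ne_of_gt (lt_of_lt_of_le hA ht.1)))).hasDerivWithinAt
  have bound : ∀ t ∈ Set.Icc A B, ‖e * t ^ (e - 1)‖ ≤ C := by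
    intro t ht
    have ht0 : 0 < t := lt_of_lt_of_le hA ht.1
    rw [norm_mul, Real.norm_eq_abs, Real.norm_eq_abs, abs_of_pos (Real.rpow_pos_of_pos ht0 _)]
    apply mul_le_mul_of_nonneg_left _ (abs_nonneg e)
    rcases le_or_gt 0 (e - 1) with h | h
    · exact le_max_of_le_right (Real.rpow_le_rpow ht0.le ht.2 h)
    · exact le_max_of_le_left (Real.rpow_le_rpow_of_nonpos hA ht.1 h.le)
  have := (convex_Icc A B).norm_image_sub_le_of_norm_hasDerivWithin_le key bound hb ha
  simpa [Real.norm_eq_abs] using this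

-- reverse bound via inverse function
lemma rpow_reverse_on {q A B a b : ℝ} (hq : q ≠ 0) (hA : 0 < A)
    (ha : 0 ≤ a) (hb : 0 ≤ b) (haq : a ^ q ∈ Set.Icc A B) (hbq : b ^ q ∈ Set.Icc A B) :
    |a - b| ≤ (|q⁻¹| * max (A ^ (q⁻¹ - 1)) (B ^ (q⁻¹ - 1))) * |a ^ q - b ^ q| := by
  have := rpow_lip_bound (e := q⁻¹) hA haq hbq
  rwa [Real.rpow_rpow_inv ha hq, Real.rpow_rpow_inv hb hq] at this

-- Lemma E: ∃ c > 0 with c|a-b| ≤ |a^q - b^q| for a ∈ (0,M], b ∈ [m,M]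
lemma rpow_reverse_bound {q m M : ℝ} (hq : q ≠ 0) (hm : 0 < m) (hmM : m ≤ M) :
    ∃ c : ℝ, 0 < c ∧ ∀ a b : ℝ, 0 < a → a ≤ M → m ≤ b → b ≤ M →
      c * |a - b| ≤ |a ^ q - b ^ q| := by
  rcases lt_or_gt_of_ne hq with hqneg | hqpos
  · -- q < 0
    set a₀ : ℝ := m * (2 : ℝ) ^ q⁻¹ with ha₀def
    have h2q : (0:ℝ) < (2 : ℝ) ^ q⁻¹ := Real.rpow_pos_of_pos two_pos _
    have ha₀pos : 0 < a₀ := mul_pos hm h2q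
    have h2lt1 : (2 : ℝ) ^ q⁻¹ < 1 :=
      Real.rpow_lt_one_of_one_lt_of_neg one_lt_two (by
        simpa using inv_neg''.mpr hqneg)
    have ha₀m : a₀ < m := by nlinarith
    have ha₀q : a₀ ^ q = 2 * m ^ q := by
      rw [ha₀def, Real.mul_rpow hm.le h2q.le, ← Real.rpow_mul (by norm_num : (0:ℝ) ≤ 2),
        inv_mul_cancel₀ hq, Real.rpow_one]
      ring
    have hMq : 0 < M ^ q := Real.rpow_pos_of_pos (lt_of_lt_of_le hm hmM) _
    set D := |q⁻¹| * max ((M ^ q) ^ (q⁻¹ - 1)) ((a₀ ^ q) ^ (q⁻¹ - 1)) with hD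
    have hDpos : 0 < D := by
      apply mul_pos (abs_pos.mpr (inv_ne_zero hq))
      exact lt_max_of_lt_left (Real.rpow_pos_of_pos hMq _)
    have hmq : 0 < m ^ q := Real.rpow_pos_of_pos hm _
    refine ⟨min D⁻¹ (m ^ q / M), lt_min (inv_pos.mpr hDpos) (div_pos hmq (lt_of_lt_of_le hm hmM)), ?_⟩
    intro a b ha0 haM hbm hbM
    have hb0 : 0 < b := lt_of_lt_of_le hm hbm
    rcases le_or_gt a₀ a with h | h
    · -- both in [a₀, M], use inverse trick
      have haq : a ^ q ∈ Set.Icc (M ^ q) (a₀ ^ q) :=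
        ⟨Real.rpow_le_rpow_of_nonpos ha0 haM hqneg.le,
         Real.rpow_le_rpow_of_nonpos ha₀pos h hqneg.le⟩
      have hbq : b ^ q ∈ Set.Icc (M ^ q) (a₀ ^ q) :=
        ⟨Real.rpow_le_rpow_of_nonpos hb0 hbM hqneg.le,
         Real.rpow_le_rpow_of_nonpos ha₀pos (le_trans ha₀m.le hbm) hqneg.le⟩
      have := rpow_reverse_on hq hMq ha0.le hb0.le haq hbq
      calc min D⁻¹ (m ^ q / M) * |a - b| ≤ D⁻¹ * |a - b| := by
            apply mul_le_mul_of_nonneg_right (min_le_left _ _) (abs_nonneg _)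
        _ ≤ |a ^ q - b ^ q| := by
            rw [inv_mul_le_iff₀ hDpos]; rw [hD]; linarith [this]
    · -- a < a₀: gap at least m^q
      have h1 : 2 * m ^ q < a ^ q := by
        rw [← ha₀q]; exact Real.rpow_lt_rpow_of_neg ha0 h hqneg
      have h2 : b ^ q ≤ m ^ q := Real.rpow_le_rpow_of_nonpos hm hbm hqneg.le
      have habs : |a - b| ≤ M := by
        rw [abs_sub_le_iff]; constructor <;> nlinarith
      have hgap : m ^ q ≤ |a ^ q - b ^ q| := by
        rw [abs_of_pos (by linarith)]; linarith
      calc min D⁻¹ (m ^ q / M) * |a - b| ≤ (m ^ q / M) * M := by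
            exact mul_le_mul (min_le_right _ _) habs (abs_nonneg _)
              (le_of_lt (div_pos hmq (lt_of_lt_of_le hm hmM)))
        _ = m ^ q := by
            rw [div_mul_cancel₀ _ (ne_of_gt (lt_of_lt_of_le hm hmM))]
        _ ≤ |a ^ q - b ^ q| := hgap
  · -- q > 0
    have hm2 : 0 < m / 2 := by linarith
    have hm2q : 0 < (m / 2) ^ q := Real.rpow_pos_of_pos hm2 _
    set D := |q⁻¹| * max (((m / 2) ^ q) ^ (q⁻¹ - 1)) ((M ^ q) ^ (q⁻¹ - 1)) with hD
    have hDpos : 0 < D := by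
      apply mul_pos (abs_pos.mpr (inv_ne_zero hq))
      exact lt_max_of_lt_left (Real.rpow_pos_of_pos hm2q _)
    have hδ : 0 < m ^ q - (m / 2) ^ q := by
      have := Real.rpow_lt_rpow hm2.le (by linarith : m / 2 < m) hqpos
      linarith
    refine ⟨min D⁻¹ ((m ^ q - (m / 2) ^ q) / M),
      lt_min (inv_pos.mpr hDpos) (div_pos hδ (lt_of_lt_of_le hm hmM)), ?_⟩
    intro a b ha0 haM hbm hbM
    have hb0 : 0 < b := lt_of_lt_of_le hm hbm
    rcases le_or_gt (m / 2) a with h | h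
    · have haq : a ^ q ∈ Set.Icc ((m / 2) ^ q) (M ^ q) :=
        ⟨Real.rpow_le_rpow hm2.le h hqpos.le, Real.rpow_le_rpow ha0.le haM hqpos.le⟩
      have hbq : b ^ q ∈ Set.Icc ((m / 2) ^ q) (M ^ q) :=
        ⟨Real.rpow_le_rpow hm2.le (by linarith) hqpos.le,
         Real.rpow_le_rpow hb0.le hbM hqpos.le⟩
      have := rpow_reverse_on hq hm2q ha0.le hb0.le haq hbq
      calc min D⁻¹ ((m ^ q - (m / 2) ^ q) / M) * |a - b| ≤ D⁻¹ * |a - b| := by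
            apply mul_le_mul_of_nonneg_right (min_le_left _ _) (abs_nonneg _)
        _ ≤ |a ^ q - b ^ q| := by
            rw [inv_mul_le_iff₀ hDpos]; rw [hD]; linarith [this]
    · have h1 : a ^ q < (m / 2) ^ q := Real.rpow_lt_rpow ha0.le h hqpos
      have h2 : m ^ q ≤ b ^ q := Real.rpow_le_rpow hm.le hbm hqpos.le
      have habs : |a - b| ≤ M := by
        rw [abs_sub_le_iff]; constructor <;> nlinarith
      have hgap : m ^ q - (m / 2) ^ q ≤ |a ^ q - b ^ q| := by
        rw [abs_sub_comm, abs_of_pos (by linarith)]; linarith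
      calc min D⁻¹ ((m ^ q - (m / 2) ^ q) / M) * |a - b|
          ≤ ((m ^ q - (m / 2) ^ q) / M) * M := by
            exact mul_le_mul (min_le_right _ _) habs (abs_nonneg _)
              (le_of_lt (div_pos hδ (lt_of_lt_of_le hm hmM)))
        _ = m ^ q - (m / 2) ^ q := by
            rw [div_mul_cancel₀ _ (ne_of_gt (lt_of_lt_of_le hm hmM))]
        _ ≤ |a ^ q - b ^ q| := hgap

-- positivity of the quadratic form given nondegeneracy
lemma quad_form_pos {n : ℕ} (hn : 2 ≤ n) (σ : Measure (sphere (0 : EuclideanSpace ℝ (Fin n)) 1))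
    [IsFiniteMeasure σ]
    (Hnd : ∀ v : EuclideanSpace ℝ (Fin n),
      (∀ᵐ (u : sphere (0 : EuclideanSpace ℝ (Fin n)) 1) ∂σ,
        (inner ℝ v (u : EuclideanSpace ℝ (Fin n)) : ℝ) = 0) → v = 0) :
    ∃ c₁ : ℝ, 0 < c₁ ∧ ∀ v : EuclideanSpace ℝ (Fin n),
      c₁ * ‖v‖ ^ 2 ≤ ∫ u, (inner ℝ v (u : EuclideanSpace ℝ (Fin n)) : ℝ) ^ 2 ∂σ := by
  set Q : EuclideanSpace ℝ (Fin n) → ℝ :=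
    fun v => ∫ u, (inner ℝ v (u : EuclideanSpace ℝ (Fin n)) : ℝ) ^ 2 ∂σ with hQ
  set T : ℝ := (σ (Set.univ : Set (sphere (0 : EuclideanSpace ℝ (Fin n)) 1))).toReal with hT
  have hT0 : 0 ≤ T := ENNReal.toReal_nonneg
  have hunit : ∀ u : sphere (0 : EuclideanSpace ℝ (Fin n)) 1, ‖(u : EuclideanSpace ℝ (Fin n))‖ = 1 :=
    fun u => mem_sphere_zero_iff_norm.mp u.2
  have hcont : ∀ v : EuclideanSpace ℝ (Fin n),
      Continuous fun u : sphere (0 : EuclideanSpace ℝ (Fin n)) 1 =>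
        (inner ℝ v (u : EuclideanSpace ℝ (Fin n)) : ℝ) ^ 2 := fun v =>
    ((continuous_const.inner continuous_subtype_val).pow 2)
  have hint : ∀ v : EuclideanSpace ℝ (Fin n),
      Integrable (fun u : sphere (0 : EuclideanSpace ℝ (Fin n)) 1 =>
        (inner ℝ v (u : EuclideanSpace ℝ (Fin n)) : ℝ) ^ 2) σ := fun v =>
    (hcont v).integrable_of_hasCompactSupport (HasCompactSupport.of_compactSpace _)
  have key : ∀ v w : EuclideanSpace ℝ (Fin n), |Q v - Q w| ≤ T * ((‖v‖ + ‖w‖) * ‖v - w‖) := by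
    intro v w
    have h1 : Q v - Q w = ∫ u, ((inner ℝ v (u : EuclideanSpace ℝ (Fin n)) : ℝ) ^ 2
        - (inner ℝ w (u : EuclideanSpace ℝ (Fin n)) : ℝ) ^ 2) ∂σ :=
      (integral_sub (hint v) (hint w)).symm
    rw [h1]
    have h2 : ∀ u : sphere (0 : EuclideanSpace ℝ (Fin n)) 1,
        ‖(inner ℝ v (u : EuclideanSpace ℝ (Fin n)) : ℝ) ^ 2
          - (inner ℝ w (u : EuclideanSpace ℝ (Fin n)) : ℝ) ^ 2‖ ≤ (‖v‖ + ‖w‖) * ‖v - w‖ := by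
      intro u
      have e1 : (inner ℝ v (u : EuclideanSpace ℝ (Fin n)) : ℝ) ^ 2
          - (inner ℝ w (u : EuclideanSpace ℝ (Fin n)) : ℝ) ^ 2 =
          (inner ℝ (v - w) (u : EuclideanSpace ℝ (Fin n)) : ℝ)
            * (inner ℝ (v + w) (u : EuclideanSpace ℝ (Fin n)) : ℝ) := by
        rw [inner_sub_left, inner_add_left]; ring
      rw [Real.norm_eq_abs, e1, abs_mul]
      have b1 : |(inner ℝ (v - w) (u : EuclideanSpace ℝ (Fin n)) : ℝ)| ≤ ‖v - w‖ := by
        calc |(inner ℝ (v - w) (u : EuclideanSpace ℝ (Fin n)) : ℝ)|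
            ≤ ‖v - w‖ * ‖(u : EuclideanSpace ℝ (Fin n))‖ := abs_real_inner_le_norm _ _
        _ = ‖v - w‖ := by rw [hunit, mul_one]
      have b2 : |(inner ℝ (v + w) (u : EuclideanSpace ℝ (Fin n)) : ℝ)| ≤ ‖v‖ + ‖w‖ := by
        calc |(inner ℝ (v + w) (u : EuclideanSpace ℝ (Fin n)) : ℝ)|
            ≤ ‖v + w‖ * ‖(u : EuclideanSpace ℝ (Fin n))‖ := abs_real_inner_le_norm _ _
        _ = ‖v + w‖ := by rw [hunit, mul_one]
        _ ≤ ‖v‖ + ‖w‖ := norm_add_le _ _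
      calc |(inner ℝ (v - w) (u : EuclideanSpace ℝ (Fin n)) : ℝ)|
            * |(inner ℝ (v + w) (u : EuclideanSpace ℝ (Fin n)) : ℝ)|
          ≤ ‖v - w‖ * (‖v‖ + ‖w‖) := mul_le_mul b1 b2 (abs_nonneg _) (norm_nonneg _)
        _ = (‖v‖ + ‖w‖) * ‖v - w‖ := by ring
    have h3 := norm_integral_le_of_norm_le_const (μ := σ)
      (C := (‖v‖ + ‖w‖) * ‖v - w‖) (Filter.Eventually.of_forall h2)
    rw [Real.norm_eq_abs] at h3
    calc |∫ u, ((inner ℝ v (u : EuclideanSpace ℝ (Fin n)) : ℝ) ^ 2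
          - (inner ℝ w (u : EuclideanSpace ℝ (Fin n)) : ℝ) ^ 2) ∂σ|
        ≤ (‖v‖ + ‖w‖) * ‖v - w‖ * T := h3
      _ = T * ((‖v‖ + ‖w‖) * ‖v - w‖) := by ring
  have hlip : LipschitzOnWith (Real.toNNReal (T * 4)) Q (closedBall (0 : EuclideanSpace ℝ (Fin n)) 2) := by
    rw [lipschitzOnWith_iff_dist_le_mul]
    intro a ha b hb
    rw [Real.dist_eq, dist_eq_norm]
    have hna : ‖a‖ ≤ 2 := mem_closedBall_zero_iff.mp ha
    have hnb : ‖b‖ ≤ 2 := mem_closedBall_zero_iff.mp hb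
    have step1 : (‖a‖ + ‖b‖) * ‖a - b‖ ≤ 4 * ‖a - b‖ :=
      mul_le_mul_of_nonneg_right (by linarith) (norm_nonneg _)
    calc |Q a - Q b| ≤ T * ((‖a‖ + ‖b‖) * ‖a - b‖) := key a b
      _ ≤ T * (4 * ‖a - b‖) := mul_le_mul_of_nonneg_left step1 hT0
      _ = (Real.toNNReal (T * 4)) * ‖a - b‖ := by
          rw [Real.coe_toNNReal _ (by linarith : (0:ℝ) ≤ T * 4)]; ring
  have hQcont : ContinuousOn Q (sphere (0 : EuclideanSpace ℝ (Fin n)) 1) := by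
    apply (hlip.continuousOn).mono
    intro z hz
    rw [mem_sphere_zero_iff_norm] at hz
    exact mem_closedBall_zero_iff.mpr (by rw [hz]; norm_num)
  have hSne : (sphere (0 : EuclideanSpace ℝ (Fin n)) 1).Nonempty := by
    refine ⟨EuclideanSpace.single (⟨0, by omega⟩ : Fin n) (1 : ℝ), ?_⟩
    rw [mem_sphere_zero_iff_norm, EuclideanSpace.norm_single]
    norm_num
  obtain ⟨v₀, hv₀S, hmin⟩ := (isCompact_sphere (0 : EuclideanSpace ℝ (Fin n)) 1).exists_isMinOn hSne hQcont
  have hv₀norm : ‖v₀‖ = 1 := mem_sphere_zero_iff_norm.mp hv₀S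
  have hQnonneg : ∀ v : EuclideanSpace ℝ (Fin n), 0 ≤ Q v := fun v =>
    integral_nonneg fun u => sq_nonneg _
  have hc₁pos : 0 < Q v₀ := by
    rcases lt_or_eq_of_le (hQnonneg v₀) with h | h
    · exact h
    · exfalso
      have hae : (fun u : sphere (0 : EuclideanSpace ℝ (Fin n)) 1 =>
          (inner ℝ v₀ (u : EuclideanSpace ℝ (Fin n)) : ℝ) ^ 2) =ᵐ[σ] 0 := by
        rw [← integral_eq_zero_iff_of_nonneg (fun u => sq_nonneg _) (hint v₀)]
        exact h.symm
      have hae' : ∀ᵐ (u : sphere (0 : EuclideanSpace ℝ (Fin n)) 1) ∂σ,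
          (inner ℝ v₀ (u : EuclideanSpace ℝ (Fin n)) : ℝ) = 0 := by
        filter_upwards [hae] with u hu
        exact pow_eq_zero_iff (two_ne_zero) |>.mp hu
      have := Hnd v₀ hae'
      rw [this, norm_zero] at hv₀norm
      norm_num at hv₀norm
  refine ⟨Q v₀, hc₁pos, ?_⟩
  intro v
  show Q v₀ * ‖v‖ ^ 2 ≤ Q v
  rcases eq_or_ne v 0 with rfl | hv
  · simp [hQnonneg]
  · have hw : (‖v‖⁻¹ • v) ∈ sphere (0 : EuclideanSpace ℝ (Fin n)) 1 := by
      rw [mem_sphere_zero_iff_norm]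
      exact norm_smul_inv_norm hv
    have hscale : Q v = ‖v‖ ^ 2 * Q (‖v‖⁻¹ • v) := by
      rw [hQ]
      simp only
      rw [← integral_const_mul]
      congr 1
      funext u
      have hv' : (inner ℝ v (u : EuclideanSpace ℝ (Fin n)) : ℝ)
          = ‖v‖ * (inner ℝ (‖v‖⁻¹ • v) (u : EuclideanSpace ℝ (Fin n)) : ℝ) := by
        rw [real_inner_smul_left, ← mul_assoc, mul_inv_cancel₀ (norm_ne_zero_iff.mpr hv), one_mul]
      rw [hv']; ring
    rw [hscale]
    have h6 : Q v₀ ≤ Q (‖v‖⁻¹ • v) := hmin hw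
    calc Q v₀ * ‖v‖ ^ 2 ≤ Q (‖v‖⁻¹ • v) * ‖v‖ ^ 2 :=
          mul_le_mul_of_nonneg_right h6 (sq_nonneg _)
      _ = ‖v‖ ^ 2 * Q (‖v‖⁻¹ • v) := by ring

set_option maxHeartbeats 1000000 in
/-- for `n ≥ 2` and `-n ≤ p < ∞`, `p ≠ 1`, the entropy point `e_p` is continuous:
if convex bodies `K i` converge in Hausdorff distance to `Klim`, and `x i` (resp. `xlim`) are the
interior points with vanishing vector integral, then `x i → xlim`. -/
theorem statement_11 {n : ℕ} (hn : 2 ≤ n) (p : ℝ) (hpl : -(n : ℝ) ≤ p) (hp1 : p ≠ 1)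
    (K : ℕ → Set (EuclideanSpace ℝ (Fin n)))
    (hK_comp : ∀ i, IsCompact (K i)) (hK_conv : ∀ i, Convex ℝ (K i))
    (hK_int : ∀ i, (interior (K i)).Nonempty)
    (Klim : Set (EuclideanSpace ℝ (Fin n)))
    (hKl_comp : IsCompact Klim) (hKl_conv : Convex ℝ Klim) (hKl_int : (interior Klim).Nonempty)
    (hconv : Tendsto (fun i => Metric.hausdorffDist (K i) Klim) atTop (nhds 0))
    (x : ℕ → EuclideanSpace ℝ (Fin n))
    (hx_int : ∀ i, x i ∈ interior (K i))
    (hx_eq : ∀ i, (∫ u : sphere (0 : EuclideanSpace ℝ (Fin n)) 1, ((suppFn (K i) u - (inner ℝ (x i) (u : EuclideanSpace ℝ (Fin n)) : ℝ)) ^ (p - 1)) • (u : EuclideanSpace ℝ (Fin n)) ∂(sphMeasure n)) = 0)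
    (hx_unique : ∀ i, ∀ z ∈ interior (K i), (∫ u : sphere (0 : EuclideanSpace ℝ (Fin n)) 1, ((suppFn (K i) u - (inner ℝ z (u : EuclideanSpace ℝ (Fin n)) : ℝ)) ^ (p - 1)) • (u : EuclideanSpace ℝ (Fin n)) ∂(sphMeasure n)) = 0 → z = x i)
    (xlim : EuclideanSpace ℝ (Fin n))
    (hxl_int : xlim ∈ interior Klim)
    (hxl_eq : (∫ u : sphere (0 : EuclideanSpace ℝ (Fin n)) 1, ((suppFn Klim u - (inner ℝ xlim (u : EuclideanSpace ℝ (Fin n)) : ℝ)) ^ (p - 1)) • (u : EuclideanSpace ℝ (Fin n)) ∂(sphMeasure n)) = 0)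
    (hxl_unique : ∀ z ∈ interior Klim, (∫ u : sphere (0 : EuclideanSpace ℝ (Fin n)) 1, ((suppFn Klim u - (inner ℝ z (u : EuclideanSpace ℝ (Fin n)) : ℝ)) ^ (p - 1)) • (u : EuclideanSpace ℝ (Fin n)) ∂(sphMeasure n)) = 0 → z = xlim) :
    Tendsto x atTop (nhds xlim) := by
  classical
  set q : ℝ := p - 1 with hqdef
  have hq : q ≠ 0 := sub_ne_zero.mpr hp1
  have hKlne : Klim.Nonempty := hKl_int.mono interior_subset
  have hKne : ∀ i, (K i).Nonempty := fun i => (hK_int i).mono interior_subset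
  obtain ⟨R₀', hR₀'⟩ := hKl_comp.isBounded.exists_norm_le
  set R₀ : ℝ := max R₀' 0 with hR₀def
  have hR₀ : ∀ y ∈ Klim, ‖y‖ ≤ R₀ := fun y hy => le_trans (hR₀' y hy) (le_max_left _ _)
  have hR₀0 : (0:ℝ) ≤ R₀ := le_max_right _ _
  obtain ⟨ε, hε, hball⟩ := Metric.mem_nhds_iff.mp (mem_interior_iff_mem_nhds.mp hxl_int)
  set r : ℝ := min (ε / 2) 1 with hrdef
  have hr0 : 0 < r := lt_min (by linarith) one_pos
  have hrε : r ≤ ε / 2 := min_le_left _ _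
  have hr1 : r ≤ 1 := min_le_right _ _
  set M : ℝ := 2 * R₀ + 2 with hMdef
  have hrM : r / 2 ≤ M := by simp only [hMdef]; linarith
  have hunit : ∀ u : sphere (0 : EuclideanSpace ℝ (Fin n)) 1,
      ‖(u : EuclideanSpace ℝ (Fin n))‖ = 1 := fun u => mem_sphere_zero_iff_norm.mp u.2
  have hxlim_norm : ‖xlim‖ ≤ R₀ := hR₀ xlim (interior_subset hxl_int)
  -- support function bounds for Klim on unit vectors
  have hKl_ub : ∀ w : EuclideanSpace ℝ (Fin n), ‖w‖ = 1 → suppFn Klim w ≤ R₀ := by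
    intro w hw
    apply suppFn_le hKlne
    intro y hy
    calc (inner ℝ y w : ℝ) ≤ ‖y‖ * ‖w‖ := real_inner_le_norm _ _
      _ ≤ R₀ := by rw [hw, mul_one]; exact hR₀ y hy
  have hblim_lb : ∀ u : sphere (0 : EuclideanSpace ℝ (Fin n)) 1,
      ε / 2 ≤ suppFn Klim u - (inner ℝ xlim (u : EuclideanSpace ℝ (Fin n)) : ℝ) := by
    intro u
    have := suppFn_gap_pos hKl_comp hε hball (hunit u)
    linarith
  -- integrability helpers
  haveI : IsFiniteMeasure (sphMeasure n) := by unfold sphMeasure; infer_instance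
  have integC : ∀ f : sphere (0 : EuclideanSpace ℝ (Fin n)) 1 → ℝ, Continuous f →
      Integrable f (sphMeasure n) := fun f hf =>
    hf.integrable_of_hasCompactSupport (HasCompactSupport.of_compactSpace f)
  have integV : ∀ F : sphere (0 : EuclideanSpace ℝ (Fin n)) 1 → EuclideanSpace ℝ (Fin n),
      Continuous F → Integrable F (sphMeasure n) := fun F hF =>
    hF.integrable_of_hasCompactSupport (HasCompactSupport.of_compactSpace F)
  have contKl : Continuous fun u : sphere (0 : EuclideanSpace ℝ (Fin n)) 1 =>
      suppFn Klim (u : EuclideanSpace ℝ (Fin n)) :=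
    (suppFn_continuous hKl_comp hKlne).comp continuous_subtype_val
  have contK : ∀ i, Continuous fun u : sphere (0 : EuclideanSpace ℝ (Fin n)) 1 =>
      suppFn (K i) (u : EuclideanSpace ℝ (Fin n)) := fun i =>
    (suppFn_continuous (hK_comp i) (hKne i)).comp continuous_subtype_val
  have contIn : ∀ z : EuclideanSpace ℝ (Fin n),
      Continuous fun u : sphere (0 : EuclideanSpace ℝ (Fin n)) 1 =>
        (inner ℝ z (u : EuclideanSpace ℝ (Fin n)) : ℝ) := fun z =>
    continuous_const.inner continuous_subtype_val
  have contRpow : ∀ g : sphere (0 : EuclideanSpace ℝ (Fin n)) 1 → ℝ, Continuous g →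
      (∀ u, 0 < g u) → Continuous fun u => g u ^ q := by
    intro g hg hgp
    apply continuous_iff_continuousAt.mpr
    intro u
    exact (Real.continuousAt_rpow_const _ _ (Or.inl (ne_of_gt (hgp u)))).comp hg.continuousAt
  -- nondegeneracy of the measure, via the uniqueness hypothesis
  have Hnd : ∀ v : EuclideanSpace ℝ (Fin n),
      (∀ᵐ (u : sphere (0 : EuclideanSpace ℝ (Fin n)) 1) ∂(sphMeasure n),
        (inner ℝ v (u : EuclideanSpace ℝ (Fin n)) : ℝ) = 0) → v = 0 := by
    intro v hv
    by_contra hv0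
    have hvn : 0 < ‖v‖ := norm_pos_iff.mpr hv0
    set t : ℝ := ε / (2 * ‖v‖) with htdef
    have ht : 0 < t := div_pos hε (by positivity)
    set z : EuclideanSpace ℝ (Fin n) := xlim + t • v with hzdef
    have htv : t * ‖v‖ = ε / 2 := by
      rw [htdef]; field_simp
    have hzball : z ∈ ball xlim ε := by
      rw [mem_ball, dist_eq_norm, hzdef, add_sub_cancel_left, norm_smul, Real.norm_eq_abs,
        abs_of_pos ht, htv]
      linarith
    have hzint : z ∈ interior Klim := interior_maximal hball isOpen_ball hzball
    have hzeq : (∫ u : sphere (0 : EuclideanSpace ℝ (Fin n)) 1,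
        ((suppFn Klim u - (inner ℝ z (u : EuclideanSpace ℝ (Fin n)) : ℝ)) ^ q) •
          (u : EuclideanSpace ℝ (Fin n)) ∂(sphMeasure n)) = 0 := by
      have hcongr : (∫ u : sphere (0 : EuclideanSpace ℝ (Fin n)) 1,
          ((suppFn Klim u - (inner ℝ z (u : EuclideanSpace ℝ (Fin n)) : ℝ)) ^ q) •
            (u : EuclideanSpace ℝ (Fin n)) ∂(sphMeasure n))
          = ∫ u : sphere (0 : EuclideanSpace ℝ (Fin n)) 1,
          ((suppFn Klim u - (inner ℝ xlim (u : EuclideanSpace ℝ (Fin n)) : ℝ)) ^ q) •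
            (u : EuclideanSpace ℝ (Fin n)) ∂(sphMeasure n) := by
        apply integral_congr_ae
        filter_upwards [hv] with u hu
        have hzz : (inner ℝ z (u : EuclideanSpace ℝ (Fin n)) : ℝ)
            = (inner ℝ xlim (u : EuclideanSpace ℝ (Fin n)) : ℝ) := by
          rw [hzdef, inner_add_left, real_inner_smul_left, hu]; ring
        rw [hzz]
      rw [hcongr]
      exact hxl_eq
    have := hxl_unique z hzint hzeq
    rw [hzdef] at this
    have h0 : t • v = 0 := by
      have := congrArg (fun y => y - xlim) this
      simpa using this
    rcases smul_eq_zero.mp h0 with h | h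
    · exact absurd h (ne_of_gt ht)
    · exact hv0 h
  obtain ⟨c₁, hc₁, hQlb⟩ := quad_form_pos hn (sphMeasure n) Hnd
  obtain ⟨c, hc, hcb⟩ := rpow_reverse_bound (q := q) hq (by linarith : (0:ℝ) < r / 2) hrM
  set T : ℝ := ((sphMeasure n) (Set.univ : Set (sphere (0 : EuclideanSpace ℝ (Fin n)) 1))).toReal
    with hTdef
  have hT0 : 0 ≤ T := ENNReal.toReal_nonneg
  set L : ℝ := |q| * max ((r / 2) ^ (q - 1)) (M ^ (q - 1)) with hLdef
  have hL0 : 0 ≤ L := by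
    apply mul_nonneg (abs_nonneg _)
    exact le_trans (le_of_lt (Real.rpow_pos_of_pos (by linarith) _)) (le_max_left _ _)
  set B : ℝ := 2 * R₀ + 1 with hBdef
  set C' : ℝ := B * (L * T) / (c * c₁) with hC'def
  have hC'0 : 0 ≤ C' := by
    apply div_nonneg _ (le_of_lt (mul_pos hc hc₁))
    apply mul_nonneg (by simp only [hBdef]; linarith) (mul_nonneg hL0 hT0)
  -- the main quantitative estimate
  have main : ∀ i, hausdorffDist (K i) Klim < min (r / 2) 1 →
      ‖x i - xlim‖ ^ 2 ≤ C' * hausdorffDist (K i) Klim := by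
    intro i hdi
    set d : ℝ := hausdorffDist (K i) Klim with hddef
    have hd0 : 0 ≤ d := hausdorffDist_nonneg
    have hdr : d < r / 2 := lt_of_lt_of_le hdi (min_le_left _ _)
    have hd1 : d < 1 := lt_of_lt_of_le hdi (min_le_right _ _)
    have hKmem : x i ∈ K i := interior_subset (hx_int i)
    -- support function comparison
    have hKi_ub : ∀ w : EuclideanSpace ℝ (Fin n), ‖w‖ = 1 → suppFn (K i) w ≤ R₀ + 1 := by
      intro w hw
      have h1 := suppFn_le_of_hausdorff (hK_comp i) hKl_comp (hKne i) hKlne hw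
      have h2 := hKl_ub w hw
      rw [← hddef] at h1
      linarith
    have hKl_le : ∀ w : EuclideanSpace ℝ (Fin n), ‖w‖ = 1 →
        suppFn Klim w ≤ suppFn (K i) w + d := by
      intro w hw
      have h1 := suppFn_le_of_hausdorff hKl_comp (hK_comp i) hKlne (hKne i) hw
      rwa [hausdorffDist_comm, ← hddef] at h1
    have hKi_le : ∀ w : EuclideanSpace ℝ (Fin n), ‖w‖ = 1 →
        suppFn (K i) w ≤ suppFn Klim w + d := by
      intro w hw
      have h1 := suppFn_le_of_hausdorff (hK_comp i) hKl_comp (hKne i) hKlne hw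
      rwa [← hddef] at h1
    -- abbreviations
    set a : sphere (0 : EuclideanSpace ℝ (Fin n)) 1 → ℝ := fun u =>
      suppFn (K i) (u : EuclideanSpace ℝ (Fin n))
        - (inner ℝ (x i) (u : EuclideanSpace ℝ (Fin n)) : ℝ) with hadef
    set b : sphere (0 : EuclideanSpace ℝ (Fin n)) 1 → ℝ := fun u =>
      suppFn (K i) (u : EuclideanSpace ℝ (Fin n))
        - (inner ℝ xlim (u : EuclideanSpace ℝ (Fin n)) : ℝ) with hbdef
    set bl : sphere (0 : EuclideanSpace ℝ (Fin n)) 1 → ℝ := fun u =>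
      suppFn Klim (u : EuclideanSpace ℝ (Fin n))
        - (inner ℝ xlim (u : EuclideanSpace ℝ (Fin n)) : ℝ) with hbldef
    obtain ⟨ρ, hρ0, hballi⟩ := Metric.mem_nhds_iff.mp (mem_interior_iff_mem_nhds.mp (hx_int i))
    have ha_pos : ∀ u, 0 < a u := by
      intro u
      have := suppFn_gap_pos (hK_comp i) hρ0 hballi (hunit u)
      simp only [hadef]
      linarith
    have hxi_inner : ∀ u : sphere (0 : EuclideanSpace ℝ (Fin n)) 1,
        |(inner ℝ (x i) (u : EuclideanSpace ℝ (Fin n)) : ℝ)| ≤ R₀ + 1 := by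
      intro u
      rw [abs_le]
      constructor
      · have h1 : (inner ℝ (x i) (-(u : EuclideanSpace ℝ (Fin n))) : ℝ)
            ≤ suppFn (K i) (-(u : EuclideanSpace ℝ (Fin n))) := inner_le_suppFn (hK_comp i) hKmem
        have h2 := hKi_ub (-(u : EuclideanSpace ℝ (Fin n))) (by rw [norm_neg]; exact hunit u)
        rw [inner_neg_right] at h1
        linarith
      · have h1 : (inner ℝ (x i) ((u : EuclideanSpace ℝ (Fin n))) : ℝ)
            ≤ suppFn (K i) (u : EuclideanSpace ℝ (Fin n)) := inner_le_suppFn (hK_comp i) hKmem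
        have h2 := hKi_ub (u : EuclideanSpace ℝ (Fin n)) (hunit u)
        linarith
    have hxl_inner : ∀ u : sphere (0 : EuclideanSpace ℝ (Fin n)) 1,
        |(inner ℝ xlim (u : EuclideanSpace ℝ (Fin n)) : ℝ)| ≤ R₀ := by
      intro u
      calc |(inner ℝ xlim (u : EuclideanSpace ℝ (Fin n)) : ℝ)|
          ≤ ‖xlim‖ * ‖(u : EuclideanSpace ℝ (Fin n))‖ := abs_real_inner_le_norm _ _
        _ ≤ R₀ := by rw [hunit, mul_one]; exact hxlim_norm
    have ha_ub : ∀ u, a u ≤ M := by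
      intro u
      have h1 := hKi_ub (u : EuclideanSpace ℝ (Fin n)) (hunit u)
      have h2 := abs_le.mp (hxi_inner u)
      simp only [hadef, hMdef]
      linarith [h2.1]
    have hb_lb : ∀ u, r / 2 ≤ b u := by
      intro u
      have h1 := hKl_le (u : EuclideanSpace ℝ (Fin n)) (hunit u)
      have h2 := hblim_lb u
      simp only [hbdef]
      linarith
    have hb_ub : ∀ u, b u ≤ M := by
      intro u
      have h1 := hKi_ub (u : EuclideanSpace ℝ (Fin n)) (hunit u)
      have h2 := abs_le.mp (hxl_inner u)
      simp only [hbdef, hMdef]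
      linarith [h2.1]
    have hbl_lb : ∀ u, r / 2 ≤ bl u := by
      intro u
      have h2 := hblim_lb u
      simp only [hbldef]
      linarith
    have hbl_ub : ∀ u, bl u ≤ M := by
      intro u
      have h1 := hKl_ub (u : EuclideanSpace ℝ (Fin n)) (hunit u)
      have h2 := abs_le.mp (hxl_inner u)
      simp only [hbldef, hMdef]
      linarith [h2.1]
    have hbbl : ∀ u, |b u - bl u| ≤ d := by
      intro u
      have h1 := hKl_le (u : EuclideanSpace ℝ (Fin n)) (hunit u)
      have h2 := hKi_le (u : EuclideanSpace ℝ (Fin n)) (hunit u)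
      have heq : b u - bl u = suppFn (K i) (u : EuclideanSpace ℝ (Fin n))
          - suppFn Klim (u : EuclideanSpace ℝ (Fin n)) := by
        simp only [hbdef, hbldef]; ring
      rw [heq, abs_le]
      constructor <;> linarith
    -- norm bounds on points
    have hxnorm : ‖x i‖ ≤ R₀ + 1 := by
      have hfin : EMetric.hausdorffEdist (K i) Klim ≠ ⊤ :=
        hausdorffEdist_ne_top_of_nonempty_of_bounded (hKne i) hKlne
          (hK_comp i).isBounded hKl_comp.isBounded
      obtain ⟨z, hz, hdz⟩ := hKl_comp.isClosed.exists_infDist_eq_dist hKlne (x i)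
      have h1 : dist (x i) z ≤ d := by
        rw [← hdz]; exact infDist_le_hausdorffDist_of_mem hKmem hfin
      calc ‖x i‖ = ‖z + (x i - z)‖ := by rw [add_sub_cancel]
        _ ≤ ‖z‖ + ‖x i - z‖ := norm_add_le _ _
        _ ≤ R₀ + 1 := by
            have := hR₀ z hz
            rw [← dist_eq_norm]
            linarith
    have hvnorm : ‖x i - xlim‖ ≤ B := by
      calc ‖x i - xlim‖ ≤ ‖x i‖ + ‖xlim‖ := norm_sub_le _ _
        _ ≤ B := by simp only [hBdef]; linarith
    -- continuity of the pieces
    have conta : Continuous a := (contK i).sub (contIn (x i))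
    have contb : Continuous b := (contK i).sub (contIn xlim)
    have contbl : Continuous bl := contKl.sub (contIn xlim)
    have contaq : Continuous fun u => a u ^ q := contRpow a conta ha_pos
    have contbq : Continuous fun u => b u ^ q :=
      contRpow b contb (fun u => lt_of_lt_of_le (by linarith) (hb_lb u))
    have contblq : Continuous fun u => bl u ^ q :=
      contRpow bl contbl (fun u => lt_of_lt_of_le (by linarith) (hbl_lb u))
    set w : EuclideanSpace ℝ (Fin n) := x i - xlim with hwdef
    have contwin : Continuous fun u : sphere (0 : EuclideanSpace ℝ (Fin n)) 1 =>
        (inner ℝ w (u : EuclideanSpace ℝ (Fin n)) : ℝ) := contIn w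
    -- the integral G and its bound
    set G : EuclideanSpace ℝ (Fin n) := ∫ u : sphere (0 : EuclideanSpace ℝ (Fin n)) 1,
      (b u ^ q) • (u : EuclideanSpace ℝ (Fin n)) ∂(sphMeasure n) with hGdef
    have hintFb : Integrable (fun u : sphere (0 : EuclideanSpace ℝ (Fin n)) 1 =>
        (b u ^ q) • (u : EuclideanSpace ℝ (Fin n))) (sphMeasure n) :=
      integV _ (contbq.smul continuous_subtype_val)
    have hintFbl : Integrable (fun u : sphere (0 : EuclideanSpace ℝ (Fin n)) 1 =>
        (bl u ^ q) • (u : EuclideanSpace ℝ (Fin n))) (sphMeasure n) :=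
      integV _ (contblq.smul continuous_subtype_val)
    have hintFa : Integrable (fun u : sphere (0 : EuclideanSpace ℝ (Fin n)) 1 =>
        (a u ^ q) • (u : EuclideanSpace ℝ (Fin n))) (sphMeasure n) :=
      integV _ (contaq.smul continuous_subtype_val)
    have hblzero : (∫ u : sphere (0 : EuclideanSpace ℝ (Fin n)) 1,
        (bl u ^ q) • (u : EuclideanSpace ℝ (Fin n)) ∂(sphMeasure n)) = 0 := hxl_eq
    have hazero : (∫ u : sphere (0 : EuclideanSpace ℝ (Fin n)) 1,
        (a u ^ q) • (u : EuclideanSpace ℝ (Fin n)) ∂(sphMeasure n)) = 0 := hx_eq i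
    have hGnorm : ‖G‖ ≤ L * d * T := by
      have hGeq : G = ∫ u : sphere (0 : EuclideanSpace ℝ (Fin n)) 1,
          ((b u ^ q - bl u ^ q) • (u : EuclideanSpace ℝ (Fin n))) ∂(sphMeasure n) := by
        have : (fun u : sphere (0 : EuclideanSpace ℝ (Fin n)) 1 =>
            (b u ^ q - bl u ^ q) • (u : EuclideanSpace ℝ (Fin n)))
            = fun u => (b u ^ q) • (u : EuclideanSpace ℝ (Fin n))
              - (bl u ^ q) • (u : EuclideanSpace ℝ (Fin n)) := by
          funext u; rw [sub_smul]
        rw [this, integral_sub hintFb hintFbl, hblzero, sub_zero]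
      rw [hGeq]
      have hbd : ∀ u : sphere (0 : EuclideanSpace ℝ (Fin n)) 1,
          ‖(b u ^ q - bl u ^ q) • (u : EuclideanSpace ℝ (Fin n))‖ ≤ L * d := by
        intro u
        rw [norm_smul, hunit, mul_one, Real.norm_eq_abs]
        have h1 := rpow_lip_bound (e := q) (A := r / 2) (B := M) (by linarith)
          ⟨hb_lb u, hb_ub u⟩ ⟨hbl_lb u, hbl_ub u⟩
        have h2 := hbbl u
        calc |b u ^ q - bl u ^ q| ≤ (|q| * max ((r/2) ^ (q - 1)) (M ^ (q - 1))) * |b u - bl u| := h1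
          _ ≤ L * d := by
              rw [hLdef]
              exact mul_le_mul_of_nonneg_left h2 (by rw [← hLdef]; exact hL0)
      calc ‖∫ u : sphere (0 : EuclideanSpace ℝ (Fin n)) 1,
            ((b u ^ q - bl u ^ q) • (u : EuclideanSpace ℝ (Fin n))) ∂(sphMeasure n)‖
          ≤ (L * d) * T := by
            have := norm_integral_le_of_norm_le_const (μ := sphMeasure n)
              (C := L * d) (Filter.Eventually.of_forall hbd)
            rwa [hTdef]
        _ = L * d * T := by ring
    -- pairing identities
    have key1 : (∫ u : sphere (0 : EuclideanSpace ℝ (Fin n)) 1,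
        (a u ^ q) * (inner ℝ w (u : EuclideanSpace ℝ (Fin n)) : ℝ) ∂(sphMeasure n)) = 0 := by
      have h := integral_inner (𝕜 := ℝ) hintFa w
      rw [hazero] at h
      simp only [inner_zero_right] at h
      have h2 : (∫ u : sphere (0 : EuclideanSpace ℝ (Fin n)) 1,
          (a u ^ q) * (inner ℝ w (u : EuclideanSpace ℝ (Fin n)) : ℝ) ∂(sphMeasure n))
          = ∫ u : sphere (0 : EuclideanSpace ℝ (Fin n)) 1,
            (inner ℝ w ((a u ^ q) • (u : EuclideanSpace ℝ (Fin n))) : ℝ) ∂(sphMeasure n) :=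
        integral_congr_ae (Filter.Eventually.of_forall fun u =>
          (real_inner_smul_right _ _ _).symm)
      rw [h2, ← h]
    have key2 : (∫ u : sphere (0 : EuclideanSpace ℝ (Fin n)) 1,
        (b u ^ q) * (inner ℝ w (u : EuclideanSpace ℝ (Fin n)) : ℝ) ∂(sphMeasure n))
        = (inner ℝ w G : ℝ) := by
      have h := integral_inner (𝕜 := ℝ) hintFb w
      have h2 : (∫ u : sphere (0 : EuclideanSpace ℝ (Fin n)) 1,
          (b u ^ q) * (inner ℝ w (u : EuclideanSpace ℝ (Fin n)) : ℝ) ∂(sphMeasure n))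
          = ∫ u : sphere (0 : EuclideanSpace ℝ (Fin n)) 1,
            (inner ℝ w ((b u ^ q) • (u : EuclideanSpace ℝ (Fin n))) : ℝ) ∂(sphMeasure n) :=
        integral_congr_ae (Filter.Eventually.of_forall fun u =>
          (real_inner_smul_right _ _ _).symm)
      rw [h2, ← h]
    set ψ : sphere (0 : EuclideanSpace ℝ (Fin n)) 1 → ℝ := fun u =>
      (a u ^ q - b u ^ q) * (b u - a u) with hψdef
    have hba : ∀ u, b u - a u = (inner ℝ w (u : EuclideanSpace ℝ (Fin n)) : ℝ) := by
      intro u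
      simp only [hadef, hbdef, hwdef]
      rw [inner_sub_left]
      ring
    have hintaq : Integrable (fun u : sphere (0 : EuclideanSpace ℝ (Fin n)) 1 =>
        (a u ^ q) * (inner ℝ w (u : EuclideanSpace ℝ (Fin n)) : ℝ)) (sphMeasure n) :=
      integC _ (contaq.mul contwin)
    have hintbq : Integrable (fun u : sphere (0 : EuclideanSpace ℝ (Fin n)) 1 =>
        (b u ^ q) * (inner ℝ w (u : EuclideanSpace ℝ (Fin n)) : ℝ)) (sphMeasure n) :=
      integC _ (contbq.mul contwin)
    have hintψ : Integrable ψ (sphMeasure n) :=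
      integC _ ((contaq.sub contbq).mul (contb.sub conta))
    have hintsq : Integrable (fun u : sphere (0 : EuclideanSpace ℝ (Fin n)) 1 =>
        (inner ℝ w (u : EuclideanSpace ℝ (Fin n)) : ℝ) ^ 2) (sphMeasure n) :=
      integC _ (contwin.pow 2)
    have hψeq : (∫ u : sphere (0 : EuclideanSpace ℝ (Fin n)) 1, ψ u ∂(sphMeasure n)) = -(inner ℝ w G : ℝ) := by
      have : ψ = fun u => (a u ^ q) * (inner ℝ w (u : EuclideanSpace ℝ (Fin n)) : ℝ)
          - (b u ^ q) * (inner ℝ w (u : EuclideanSpace ℝ (Fin n)) : ℝ) := by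
        funext u
        rw [hψdef]
        simp only
        rw [hba u]
        ring
      rw [this, integral_sub hintaq hintbq, key1, key2]
      ring
    -- pointwise lower bound
    have hptwise : ∀ u : sphere (0 : EuclideanSpace ℝ (Fin n)) 1,
        c * (inner ℝ w (u : EuclideanSpace ℝ (Fin n)) : ℝ) ^ 2 ≤ |ψ u| := by
      intro u
      have h1 := hcb (a u) (b u) (ha_pos u) (ha_ub u) (hb_lb u) (hb_ub u)
      have h2 : |ψ u| = |a u ^ q - b u ^ q| * |b u - a u| := by
        rw [hψdef]; simp only; rw [abs_mul]
      have h3 : |b u - a u| = |a u - b u| := abs_sub_comm _ _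
      have h4 : c * |a u - b u| * |b u - a u| ≤ |a u ^ q - b u ^ q| * |b u - a u| :=
        mul_le_mul_of_nonneg_right h1 (abs_nonneg _)
      have h5 : (inner ℝ w (u : EuclideanSpace ℝ (Fin n)) : ℝ) ^ 2 = |b u - a u| ^ 2 := by
        rw [← hba u, sq_abs]
      rw [h2, h5]
      calc c * |b u - a u| ^ 2 = c * |a u - b u| * |b u - a u| := by rw [h3]; ring
        _ ≤ |a u ^ q - b u ^ q| * |b u - a u| := h4
    -- sign analysis and the key estimate
    have hkey : c * (∫ u : sphere (0 : EuclideanSpace ℝ (Fin n)) 1, (inner ℝ w (u : EuclideanSpace ℝ (Fin n)) : ℝ) ^ 2 ∂(sphMeasure n))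
        ≤ ‖w‖ * ‖G‖ := by
      rcases lt_or_gt_of_ne hq with hqneg | hqpos
      · -- q < 0 : ψ ≥ 0
        have hsign : ∀ u, 0 ≤ ψ u := by
          intro u
          rw [hψdef]
          simp only
          rcases le_total (a u) (b u) with h | h
          · have : b u ^ q ≤ a u ^ q := Real.rpow_le_rpow_of_nonpos (ha_pos u) h hqneg.le
            nlinarith
          · have : a u ^ q ≤ b u ^ q := by
              exact Real.rpow_le_rpow_of_nonpos
                (lt_of_lt_of_le (half_pos hr0) (hb_lb u)) h hqneg.le
            nlinarith
        have h6 : ∀ u : sphere (0 : EuclideanSpace ℝ (Fin n)) 1,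
            c * (inner ℝ w (u : EuclideanSpace ℝ (Fin n)) : ℝ) ^ 2 ≤ ψ u := by
          intro u
          have := hptwise u
          rwa [abs_of_nonneg (hsign u)] at this
        calc c * (∫ u : sphere (0 : EuclideanSpace ℝ (Fin n)) 1, (inner ℝ w (u : EuclideanSpace ℝ (Fin n)) : ℝ) ^ 2 ∂(sphMeasure n))
            = ∫ u : sphere (0 : EuclideanSpace ℝ (Fin n)) 1, c * (inner ℝ w (u : EuclideanSpace ℝ (Fin n)) : ℝ) ^ 2 ∂(sphMeasure n) :=
              (integral_const_mul c _).symm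
          _ ≤ ∫ u : sphere (0 : EuclideanSpace ℝ (Fin n)) 1, ψ u ∂(sphMeasure n) :=
              integral_mono (hintsq.const_mul c) hintψ h6
          _ = -(inner ℝ w G : ℝ) := hψeq
          _ ≤ |(inner ℝ w G : ℝ)| := neg_le_abs _
          _ ≤ ‖w‖ * ‖G‖ := abs_real_inner_le_norm _ _
      · -- q > 0 : ψ ≤ 0
        have hsign : ∀ u, ψ u ≤ 0 := by
          intro u
          rw [hψdef]
          simp only
          rcases le_total (a u) (b u) with h | h
          · have : a u ^ q ≤ b u ^ q := Real.rpow_le_rpow (ha_pos u).le h hqpos.le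
            nlinarith
          · have : b u ^ q ≤ a u ^ q := by
              exact Real.rpow_le_rpow
                (le_of_lt (lt_of_lt_of_le (half_pos hr0) (hb_lb u))) h hqpos.le
            nlinarith
        have h6 : ∀ u : sphere (0 : EuclideanSpace ℝ (Fin n)) 1,
            c * (inner ℝ w (u : EuclideanSpace ℝ (Fin n)) : ℝ) ^ 2 ≤ -ψ u := by
          intro u
          have := hptwise u
          rwa [abs_of_nonpos (hsign u)] at this
        calc c * (∫ u : sphere (0 : EuclideanSpace ℝ (Fin n)) 1, (inner ℝ w (u : EuclideanSpace ℝ (Fin n)) : ℝ) ^ 2 ∂(sphMeasure n))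
            = ∫ u : sphere (0 : EuclideanSpace ℝ (Fin n)) 1, c * (inner ℝ w (u : EuclideanSpace ℝ (Fin n)) : ℝ) ^ 2 ∂(sphMeasure n) :=
              (integral_const_mul c _).symm
          _ ≤ ∫ u : sphere (0 : EuclideanSpace ℝ (Fin n)) 1, -ψ u ∂(sphMeasure n) :=
              integral_mono (hintsq.const_mul c) hintψ.neg h6
          _ = -∫ u : sphere (0 : EuclideanSpace ℝ (Fin n)) 1, ψ u ∂(sphMeasure n) := integral_neg _
          _ = (inner ℝ w G : ℝ) := by rw [hψeq]; ring
          _ ≤ |(inner ℝ w G : ℝ)| := le_abs_self _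
          _ ≤ ‖w‖ * ‖G‖ := abs_real_inner_le_norm _ _
    -- combine
    have hQw := hQlb w
    have hchain : c * (c₁ * ‖w‖ ^ 2) ≤ B * (L * d * T) := by
      calc c * (c₁ * ‖w‖ ^ 2)
          ≤ c * (∫ u : sphere (0 : EuclideanSpace ℝ (Fin n)) 1, (inner ℝ w (u : EuclideanSpace ℝ (Fin n)) : ℝ) ^ 2 ∂(sphMeasure n)) :=
            mul_le_mul_of_nonneg_left hQw hc.le
        _ ≤ ‖w‖ * ‖G‖ := hkey
        _ ≤ B * (L * d * T) := by
            apply mul_le_mul hvnorm hGnorm (norm_nonneg _)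
            simp only [hBdef]; linarith
    rw [hC'def]
    rw [div_mul_eq_mul_div, le_div_iff₀ (mul_pos hc hc₁)]
    calc ‖w‖ ^ 2 * (c * c₁) = c * (c₁ * ‖w‖ ^ 2) := by ring
      _ ≤ B * (L * d * T) := hchain
      _ = B * (L * T) * d := by ring
  -- conclude by squeezing
  have hev : ∀ᶠ i in atTop, hausdorffDist (K i) Klim < min (r / 2) 1 :=
    hconv.eventually (gt_mem_nhds (lt_min (by linarith) one_pos))
  have hsq : ∀ᶠ i in atTop, ‖x i - xlim‖ ^ 2 ≤ C' * hausdorffDist (K i) Klim := by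
    filter_upwards [hev] with i hi
    exact main i hi
  have hCd : Tendsto (fun i => C' * hausdorffDist (K i) Klim) atTop (nhds 0) := by
    have := hconv.const_mul C'
    simpa using this
  have hsqz : Tendsto (fun i => ‖x i - xlim‖ ^ 2) atTop (nhds 0) := by
    apply squeeze_zero' (Filter.Eventually.of_forall fun i => sq_nonneg _) hsq hCd
  have hnorm : Tendsto (fun i => ‖x i - xlim‖) atTop (nhds 0) := by
    have h2 : (fun i => ‖x i - xlim‖) = fun i => Real.sqrt (‖x i - xlim‖ ^ 2) := by
      funext i
      rw [Real.sqrt_sq (norm_nonneg _)]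
    rw [h2]
    have h3 := hsqz.sqrt
    simpa using h3
  rw [tendsto_iff_norm_sub_tendsto_zero]
  exact hnorm
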